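/- Let g : [T₁, ∞) → ℝ≥0 be continuous and satisfy g(t) ≤ C(1+t)^{−3/2}. Suppose h : [T₁, ∞) → ℝ≥0 is measurable with ∫_{T₁}^∞ (1+τ)² h(τ) dτ ≤ C. Then for all t ≥ T₁, ∫_{T₁}^t (1+t−τ)^{−5/4} g(τ)^{1/2} h(τ)^{1/2} dτ ≤ C' (1+t)^{−5/4} for some constant C' independent of t. -/

import Mathlib

set_option maxHeartbeats 1000000
open MeasureTheory Real

private lemma rpow_neg_le_of_le {x y c p : ℝ} (hy : 0 < y) (hc : 0 < c)
    (hxy : y ≤ c * x) (hp : 0 ≤ p) : x ^ (-p) ≤ c ^ p * y ^ (-p) := by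
  have hx : 0 < x := by nlinarith
  have h1 : y ^ p ≤ c ^ p * x ^ p := by
    rw [← Real.mul_rpow hc.le hx.le]
    exact Real.rpow_le_rpow hy.le hxy hp
  have hxp : 0 < x ^ p := Real.rpow_pos_of_pos hx p
  have hyp : 0 < y ^ p := Real.rpow_pos_of_pos hy p
  have hcp : 0 < c ^ p := Real.rpow_pos_of_pos hc p
  rw [Real.rpow_neg hx.le, Real.rpow_neg hy.le, inv_eq_one_div, inv_eq_one_div,
    mul_one_div, div_le_div_iff₀ hxp hyp]
  nlinarith

private lemma integral_one_add_rpow (a b p : ℝ) (ha : 0 ≤ a) (hab : a ≤ b) (hp : p ≠ -1) :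
    ∫ τ in a..b, (1 + τ) ^ p = ((1 + b) ^ (p + 1) - (1 + a) ^ (p + 1)) / (p + 1) := by
  have hp1 : p + 1 ≠ 0 := by intro hcon; apply hp; linarith
  have key : ∀ τ ∈ Set.uIcc a b,
      HasDerivAt (fun x => (1 + x) ^ (p + 1) / (p + 1)) ((1 + τ) ^ p) τ := by
    intro τ hτ
    rw [Set.uIcc_of_le hab] at hτ
    have hpos : (0:ℝ) < 1 + τ := by have := hτ.1; linarith
    have h1 : HasDerivAt (fun x : ℝ => 1 + x) 1 τ := (hasDerivAt_id τ).const_add 1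
    have h2 := (Real.hasDerivAt_rpow_const (x := 1 + τ) (p := p + 1) (Or.inl hpos.ne')).comp τ h1
    have h3 := h2.div_const (p + 1)
    have heq : p + 1 - 1 = p := by ring
    rw [heq, mul_one, mul_div_cancel_left₀ _ hp1] at h3
    exact h3
  have hint : IntervalIntegrable (fun τ => (1 + τ) ^ p) volume a b := by
    apply ContinuousOn.intervalIntegrable
    apply ContinuousOn.rpow_const (by fun_prop)
    intro x hx
    rw [Set.uIcc_of_le hab] at hx
    have := hx.1
    left; intro hcon; linarith
  rw [intervalIntegral.integral_eq_sub_of_hasDerivAt key hint]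
  ring

private lemma two_rpow_le (q r : ℝ) (hq : q ≤ r) (hn : (n : ℕ) = r) :
    (2:ℝ) ^ q ≤ 2 ^ (n:ℕ) := by
  calc (2:ℝ) ^ q ≤ 2 ^ r := Real.rpow_le_rpow_of_exponent_le (by norm_num) hq
  _ = 2 ^ (n:ℕ) := by rw [← hn, Real.rpow_natCast]

private lemma conv_bound (T₁ t : ℝ) (hT₁ : 0 ≤ T₁) (ht : T₁ ≤ t) :
    ∫ τ in T₁..t, (1 + t - τ) ^ (-(5:ℝ)/2) * (1 + τ) ^ (-(7:ℝ)/2)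
      ≤ 14 * (1 + t) ^ (-(5:ℝ)/2) := by
  have h1t : (0:ℝ) < 1 + t := by linarith
  -- continuity helpers
  have c1 : ContinuousOn (fun τ : ℝ => (1 + t - τ) ^ (-(5:ℝ)/2)) (Set.uIcc T₁ t) := by
    apply ContinuousOn.rpow_const (by fun_prop)
    intro x hx
    rw [Set.uIcc_of_le ht] at hx
    left; have := hx.2; intro hcon; linarith
  have c2 : ContinuousOn (fun τ : ℝ => (1 + τ) ^ (-(7:ℝ)/2)) (Set.uIcc T₁ t) := by
    apply ContinuousOn.rpow_const (by fun_prop)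
    intro x hx
    rw [Set.uIcc_of_le ht] at hx
    left; have := hx.1; intro hcon; linarith
  have i1 : IntervalIntegrable (fun τ => (1 + t - τ) ^ (-(5:ℝ)/2) * (1 + τ) ^ (-(7:ℝ)/2))
      volume T₁ t := (c1.mul c2).intervalIntegrable
  have i2 : IntervalIntegrable
      (fun τ => 8 * (1 + t) ^ (-(5:ℝ)/2) * (1 + τ) ^ (-(7:ℝ)/2)
        + 16 * (1 + t) ^ (-(7:ℝ)/2) * (1 + t - τ) ^ (-(5:ℝ)/2)) volume T₁ t :=
    ((continuousOn_const.mul c2).add (continuousOn_const.mul c1)).intervalIntegrable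
  have hmono : ∫ τ in T₁..t, (1 + t - τ) ^ (-(5:ℝ)/2) * (1 + τ) ^ (-(7:ℝ)/2)
      ≤ ∫ τ in T₁..t, (8 * (1 + t) ^ (-(5:ℝ)/2) * (1 + τ) ^ (-(7:ℝ)/2)
        + 16 * (1 + t) ^ (-(7:ℝ)/2) * (1 + t - τ) ^ (-(5:ℝ)/2)) := by
    apply intervalIntegral.integral_mono_on ht i1 i2
    intro τ hτ
    have hp1 : (0:ℝ) < 1 + t - τ := by have := hτ.2; linarith
    have hp2 : (0:ℝ) < 1 + τ := by have := hτ.1; linarith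
    have e5 : (-(5:ℝ)/2) = -((5:ℝ)/2) := by norm_num
    have e7 : (-(7:ℝ)/2) = -((7:ℝ)/2) := by norm_num
    rcases le_or_gt τ (t/2) with hc | hc
    · have hkey : 1 + t ≤ 2 * (1 + t - τ) := by linarith
      have h8 : (1 + t - τ) ^ (-(5:ℝ)/2) ≤ 8 * (1 + t) ^ (-(5:ℝ)/2) := by
        rw [e5]
        calc (1 + t - τ) ^ (-((5:ℝ)/2)) ≤ (2:ℝ) ^ ((5:ℝ)/2) * (1 + t) ^ (-((5:ℝ)/2)) :=
              rpow_neg_le_of_le h1t (by norm_num) hkey (by norm_num)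
        _ ≤ 8 * (1 + t) ^ (-((5:ℝ)/2)) := by
              have h28 : (2:ℝ) ^ ((5:ℝ)/2) ≤ 8 := by
                have := two_rpow_le (n := 3) ((5:ℝ)/2) 3 (by norm_num) (by norm_num)
                norm_num at this ⊢; linarith
              have := Real.rpow_pos_of_pos h1t (-((5:ℝ)/2))
              nlinarith
      have hpos2 : 0 < (1 + τ) ^ (-(7:ℝ)/2) := Real.rpow_pos_of_pos hp2 _
      have hpos1 : 0 < (1 + t - τ) ^ (-(5:ℝ)/2) := Real.rpow_pos_of_pos hp1 _
      have hposT : 0 < (1 + t) ^ (-(7:ℝ)/2) := Real.rpow_pos_of_pos h1t _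
      nlinarith
    · have hkey : 1 + t ≤ 2 * (1 + τ) := by linarith
      have h16 : (1 + τ) ^ (-(7:ℝ)/2) ≤ 16 * (1 + t) ^ (-(7:ℝ)/2) := by
        rw [e7]
        calc (1 + τ) ^ (-((7:ℝ)/2)) ≤ (2:ℝ) ^ ((7:ℝ)/2) * (1 + t) ^ (-((7:ℝ)/2)) :=
              rpow_neg_le_of_le h1t (by norm_num) hkey (by norm_num)
        _ ≤ 16 * (1 + t) ^ (-((7:ℝ)/2)) := by
              have h216 : (2:ℝ) ^ ((7:ℝ)/2) ≤ 16 := by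
                have := two_rpow_le (n := 4) ((7:ℝ)/2) 4 (by norm_num) (by norm_num)
                norm_num at this ⊢; linarith
              have := Real.rpow_pos_of_pos h1t (-((7:ℝ)/2))
              nlinarith
      have hpos2 : 0 < (1 + τ) ^ (-(7:ℝ)/2) := Real.rpow_pos_of_pos hp2 _
      have hpos1 : 0 < (1 + t - τ) ^ (-(5:ℝ)/2) := Real.rpow_pos_of_pos hp1 _
      have hposT : 0 < (1 + t) ^ (-(5:ℝ)/2) := Real.rpow_pos_of_pos h1t _
      nlinarith
  -- compute the two integrals
  have int1 : ∫ τ in T₁..t, (1 + τ) ^ (-(7:ℝ)/2) ≤ 2/5 := by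
    rw [integral_one_add_rpow T₁ t (-(7:ℝ)/2) hT₁ ht (by norm_num)]
    have hA : (1 + t) ^ (-(7:ℝ)/2 + 1) ≥ 0 := (Real.rpow_pos_of_pos h1t _).le
    have hB : (1 + T₁) ^ (-(7:ℝ)/2 + 1) ≤ 1 :=
      Real.rpow_le_one_of_one_le_of_nonpos (by linarith) (by norm_num)
    rw [div_le_iff_of_neg (by norm_num : (-(7:ℝ)/2 + 1) < 0)]
    nlinarith
  have int2 : ∫ τ in T₁..t, (1 + t - τ) ^ (-(5:ℝ)/2) ≤ 2/3 := by
    have : (∫ τ in T₁..t, (1 + t - τ) ^ (-(5:ℝ)/2))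
        = ∫ τ in T₁..t, (fun x => (1 + x) ^ (-(5:ℝ)/2)) (t - τ) := by
      apply intervalIntegral.integral_congr
      intro x _
      simp only [add_sub_assoc]
    rw [this, intervalIntegral.integral_comp_sub_left (fun x => (1 + x) ^ (-(5:ℝ)/2)) t,
      sub_self]
    rw [integral_one_add_rpow 0 (t - T₁) (-(5:ℝ)/2) le_rfl (by linarith) (by norm_num)]
    have hA : (1 + (t - T₁)) ^ (-(5:ℝ)/2 + 1) ≥ 0 := (Real.rpow_pos_of_pos (by linarith) _).le
    have hB : ((1:ℝ) + 0) ^ (-(5:ℝ)/2 + 1) = 1 := by norm_num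
    rw [div_le_iff_of_neg (by norm_num : (-(5:ℝ)/2 + 1) < 0)]
    nlinarith
  have hsplit : ∫ τ in T₁..t, (8 * (1 + t) ^ (-(5:ℝ)/2) * (1 + τ) ^ (-(7:ℝ)/2)
        + 16 * (1 + t) ^ (-(7:ℝ)/2) * (1 + t - τ) ^ (-(5:ℝ)/2))
      = 8 * (1 + t) ^ (-(5:ℝ)/2) * (∫ τ in T₁..t, (1 + τ) ^ (-(7:ℝ)/2))
        + 16 * (1 + t) ^ (-(7:ℝ)/2) * (∫ τ in T₁..t, (1 + t - τ) ^ (-(5:ℝ)/2)) := by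
    rw [intervalIntegral.integral_add (f := fun τ => 8 * (1 + t) ^ (-(5:ℝ)/2) * (1 + τ) ^ (-(7:ℝ)/2))
        (g := fun τ => 16 * (1 + t) ^ (-(7:ℝ)/2) * (1 + t - τ) ^ (-(5:ℝ)/2)) (ContinuousOn.intervalIntegrable
        (continuousOn_const.mul c2)) (ContinuousOn.intervalIntegrable
        (continuousOn_const.mul c1)),
      intervalIntegral.integral_const_mul, intervalIntegral.integral_const_mul]
  have h75 : (1 + t) ^ (-(7:ℝ)/2) ≤ (1 + t) ^ (-(5:ℝ)/2) :=
    Real.rpow_le_rpow_of_exponent_le (by linarith) (by norm_num)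
  have hposT5 : 0 < (1 + t) ^ (-(5:ℝ)/2) := Real.rpow_pos_of_pos h1t _
  have hposT7 : 0 < (1 + t) ^ (-(7:ℝ)/2) := Real.rpow_pos_of_pos h1t _
  have hi2nonneg : 0 ≤ ∫ τ in T₁..t, (1 + t - τ) ^ (-(5:ℝ)/2) := by
    apply intervalIntegral.integral_nonneg ht
    intro τ hτ
    exact (Real.rpow_pos_of_pos (by have := hτ.2; linarith) _).le
  have hi1nonneg : 0 ≤ ∫ τ in T₁..t, (1 + τ) ^ (-(7:ℝ)/2) := by
    apply intervalIntegral.integral_nonneg ht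
    intro τ hτ
    exact (Real.rpow_pos_of_pos (by have := hτ.1; linarith) _).le
  calc ∫ τ in T₁..t, (1 + t - τ) ^ (-(5:ℝ)/2) * (1 + τ) ^ (-(7:ℝ)/2)
      ≤ _ := hmono
  _ = _ := hsplit
  _ ≤ 14 * (1 + t) ^ (-(5:ℝ)/2) := by nlinarith

/-- Hölder-inequality step (2.47): if `g(τ) ≤ C (1+τ)^(−3/2)` on `[T₁, ∞)` and
`∫_{T₁}^∞ (1+τ)² h(τ) dτ ≤ C`, then
`∫_{T₁}^t (1+t−τ)^(−5/4) g(τ)^{1/2} h(τ)^{1/2} dτ ≤ C' (1+t)^(−5/4)` for all `t ≥ T₁`. -/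
theorem hoelder_convolution_step (T₁ C : ℝ) (hT₁ : 0 ≤ T₁) (hC : 0 < C)
    (g h : ℝ → ℝ)
    (hgcont : ContinuousOn g (Set.Ici T₁))
    (hg0 : ∀ τ, T₁ ≤ τ → 0 ≤ g τ)
    (hg : ∀ τ, T₁ ≤ τ → g τ ≤ C * (1 + τ) ^ (-(3 : ℝ) / 2))
    (hhm : Measurable h) (hh0 : ∀ τ, T₁ ≤ τ → 0 ≤ h τ)
    (hh : (∫ τ in Set.Ioi T₁, (1 + τ) ^ 2 * h τ) ≤ C)
    (hhint : IntegrableOn (fun τ => (1 + τ) ^ 2 * h τ) (Set.Ioi T₁)) :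
    ∃ C' > 0, ∀ t, T₁ ≤ t →
      (∫ τ in T₁..t, (1 + t - τ) ^ (-(5 : ℝ) / 4) * (g τ) ^ ((1 : ℝ) / 2) * (h τ) ^ ((1 : ℝ) / 2))
        ≤ C' * (1 + t) ^ (-(5 : ℝ) / 4) := by
  refine ⟨8 * C, by positivity, fun t ht => ?_⟩
  have h1t : (0:ℝ) < 1 + t := by linarith
  set P : ℝ → ℝ := fun τ => (1 + t) ^ ((5:ℝ)/4) * ((1 + t - τ) ^ (-(5:ℝ)/2) * g τ / (1 + τ) ^ 2)
    with hP
  set Q : ℝ → ℝ := fun τ => (1 + t) ^ (-(5:ℝ)/4) * ((1 + τ) ^ 2 * h τ) with hQ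
  -- pointwise AM-GM bound on Icc
  have hpt : ∀ τ ∈ Set.Icc T₁ t,
      (1 + t - τ) ^ (-(5:ℝ)/4) * g τ ^ ((1:ℝ)/2) * h τ ^ ((1:ℝ)/2) ≤ (P τ + Q τ) / 2 := by
    intro τ hτ
    have hp1 : (0:ℝ) < 1 + t - τ := by have := hτ.2; linarith
    have hp2 : (0:ℝ) < 1 + τ := by have := hτ.1; linarith
    have hgτ : 0 ≤ g τ := hg0 τ hτ.1
    have hhτ : 0 ≤ h τ := hh0 τ hτ.1
    set s : ℝ := (1 + t) ^ ((5:ℝ)/8) with hs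
    have hspos : 0 < s := Real.rpow_pos_of_pos h1t _
    set a : ℝ := (1 + t - τ) ^ (-(5:ℝ)/4) * Real.sqrt (g τ) * s / (1 + τ) with ha
    set b : ℝ := Real.sqrt (h τ) * (1 + τ) / s with hb
    have hAA : (1 + t - τ) ^ (-(5:ℝ)/4) * (1 + t - τ) ^ (-(5:ℝ)/4)
        = (1 + t - τ) ^ (-(5:ℝ)/2) := by
      rw [← Real.rpow_add hp1]; norm_num
    have hss : s * s = (1 + t) ^ ((5:ℝ)/4) := by
      rw [hs, ← Real.rpow_add h1t]; norm_num
    have hssinv : (1 + t) ^ (-(5:ℝ)/4) = 1 / (s * s) := by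
      rw [hss, eq_div_iff (ne_of_gt (Real.rpow_pos_of_pos h1t _)), ← Real.rpow_add h1t]
      norm_num
    have hgg : Real.sqrt (g τ) * Real.sqrt (g τ) = g τ := Real.mul_self_sqrt hgτ
    have hhh : Real.sqrt (h τ) * Real.sqrt (h τ) = h τ := Real.mul_self_sqrt hhτ
    have hab : a * b = (1 + t - τ) ^ (-(5:ℝ)/4) * g τ ^ ((1:ℝ)/2) * h τ ^ ((1:ℝ)/2) := by
      rw [ha, hb, ← Real.sqrt_eq_rpow, ← Real.sqrt_eq_rpow]
      field_simp
    have ha2 : a * a = P τ := by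
      have hstep : a * a = ((1 + t - τ) ^ (-(5:ℝ)/4) * (1 + t - τ) ^ (-(5:ℝ)/4))
          * (Real.sqrt (g τ) * Real.sqrt (g τ)) * (s * s) / ((1 + τ) ^ 2) := by
        rw [ha]; field_simp
      rw [hstep, hAA, hgg, hss]
      simp only [hP]
      ring
    have hb2 : b * b = Q τ := by
      have hstep : b * b = (Real.sqrt (h τ) * Real.sqrt (h τ))
          * ((1 + τ) ^ 2) / (s * s) := by
        rw [hb]; field_simp
      rw [hstep, hhh]
      simp only [hQ, hssinv]
      ring
    rw [← hab, ← ha2, ← hb2]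
    nlinarith [sq_nonneg (a - b)]
  -- continuity / integrability facts
  have cA : ContinuousOn (fun τ : ℝ => (1 + t - τ) ^ (-(5:ℝ)/2)) (Set.Icc T₁ t) := by
    apply ContinuousOn.rpow_const (by fun_prop)
    intro x hx; left; have := hx.2; intro hcon; linarith
  have cP : ContinuousOn P (Set.Icc T₁ t) := by
    apply ContinuousOn.mul continuousOn_const
    apply ContinuousOn.div (cA.mul (hgcont.mono (fun x hx => hx.1))) (by fun_prop)
    intro x hx
    have hx0 : (0:ℝ) < 1 + x := by have := hx.1; linarith
    positivity
  have iP : IntervalIntegrable P volume T₁ t := by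
    apply ContinuousOn.intervalIntegrable
    rwa [Set.uIcc_of_le ht]
  have hQint : IntegrableOn (fun τ => (1 + τ) ^ 2 * h τ) (Set.Ioc T₁ t) :=
    hhint.mono_set Set.Ioc_subset_Ioi_self
  have iQ : IntervalIntegrable Q volume T₁ t := by
    rw [intervalIntegrable_iff_integrableOn_Ioc_of_le ht]
    exact (hQint.const_mul _)
  have iPQ : IntervalIntegrable (fun τ => (P τ + Q τ) / 2) volume T₁ t :=
    (iP.add iQ).div_const 2
  have iφ : IntervalIntegrable
      (fun τ => (1 + t - τ) ^ (-(5:ℝ)/4) * g τ ^ ((1:ℝ)/2) * h τ ^ ((1:ℝ)/2)) volume T₁ t := by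
    rw [intervalIntegrable_iff_integrableOn_Ioc_of_le ht]
    have hmeas : AEStronglyMeasurable
        (fun τ => (1 + t - τ) ^ (-(5:ℝ)/4) * g τ ^ ((1:ℝ)/2) * h τ ^ ((1:ℝ)/2))
        (volume.restrict (Set.Ioc T₁ t)) := by
      apply AEStronglyMeasurable.mul
      · apply AEStronglyMeasurable.mul
        · exact (Measurable.aestronglyMeasurable (by fun_prop))
        · apply ContinuousOn.aestronglyMeasurable _ measurableSet_Ioc
          apply ContinuousOn.rpow_const
            (hgcont.mono (fun x hx => le_of_lt hx.1))
          intro x hx; right; norm_num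
      · exact (Measurable.aestronglyMeasurable (by fun_prop))
    have hPQi : Integrable (fun τ => (P τ + Q τ) / 2) (volume.restrict (Set.Ioc T₁ t)) := by
      have := (intervalIntegrable_iff_integrableOn_Ioc_of_le ht).mp iPQ
      exact this
    apply hPQi.mono' hmeas
    rw [ae_restrict_iff' measurableSet_Ioc]
    apply Filter.Eventually.of_forall
    intro τ hτ
    have hτ' : τ ∈ Set.Icc T₁ t := ⟨hτ.1.le, hτ.2⟩
    have hnn : 0 ≤ (1 + t - τ) ^ (-(5:ℝ)/4) * g τ ^ ((1:ℝ)/2) * h τ ^ ((1:ℝ)/2) := by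
      have hp1 : (0:ℝ) < 1 + t - τ := by have := hτ'.2; linarith
      have := hg0 τ hτ'.1; have := hh0 τ hτ'.1
      positivity
    rw [Real.norm_eq_abs, abs_of_nonneg hnn]
    exact hpt τ hτ'
  -- integral monotonicity
  have hmono := intervalIntegral.integral_mono_on ht iφ iPQ hpt
  -- compute/bound ∫ P
  have hinner : ∫ τ in T₁..t, (1 + t - τ) ^ (-(5:ℝ)/2) * g τ / (1 + τ) ^ 2
      ≤ 14 * C * (1 + t) ^ (-(5:ℝ)/2) := by
    have hconv := conv_bound T₁ t hT₁ ht
    have hstep : ∫ τ in T₁..t, (1 + t - τ) ^ (-(5:ℝ)/2) * g τ / (1 + τ) ^ 2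
        ≤ ∫ τ in T₁..t, C * ((1 + t - τ) ^ (-(5:ℝ)/2) * (1 + τ) ^ (-(7:ℝ)/2)) := by
      apply intervalIntegral.integral_mono_on ht
      · apply ContinuousOn.intervalIntegrable
        rw [Set.uIcc_of_le ht]
        apply ContinuousOn.div (cA.mul (hgcont.mono (fun x hx => hx.1))) (by fun_prop)
        intro x hx
        have hx0 : (0:ℝ) < 1 + x := by have := hx.1; linarith
        positivity
      · apply ContinuousOn.intervalIntegrable
        rw [Set.uIcc_of_le ht]
        apply ContinuousOn.mul continuousOn_const
        apply ContinuousOn.mul cA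
        apply ContinuousOn.rpow_const (by fun_prop)
        intro x hx; left; have := hx.1; intro hcon; linarith
      · intro τ hτ
        have hp1 : (0:ℝ) < 1 + t - τ := by have := hτ.2; linarith
        have hp2 : (0:ℝ) < 1 + τ := by have := hτ.1; linarith
        have hA2 : 0 ≤ (1 + t - τ) ^ (-(5:ℝ)/2) := (Real.rpow_pos_of_pos hp1 _).le
        have hkey : (1 + τ) ^ (-(3:ℝ)/2) / (1 + τ) ^ 2 = (1 + τ) ^ (-(7:ℝ)/2) := by
          rw [← Real.rpow_natCast (1 + τ) 2, ← Real.rpow_sub hp2]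
          norm_num
        calc (1 + t - τ) ^ (-(5:ℝ)/2) * g τ / (1 + τ) ^ 2
            ≤ (1 + t - τ) ^ (-(5:ℝ)/2) * (C * (1 + τ) ^ (-(3:ℝ)/2)) / (1 + τ) ^ 2 := by
              gcongr
              exact hg τ hτ.1
          _ = C * ((1 + t - τ) ^ (-(5:ℝ)/2) * (1 + τ) ^ (-(7:ℝ)/2)) := by
              rw [← hkey]; ring
    calc ∫ τ in T₁..t, (1 + t - τ) ^ (-(5:ℝ)/2) * g τ / (1 + τ) ^ 2
        ≤ ∫ τ in T₁..t, C * ((1 + t - τ) ^ (-(5:ℝ)/2) * (1 + τ) ^ (-(7:ℝ)/2)) := hstep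
      _ = C * ∫ τ in T₁..t, (1 + t - τ) ^ (-(5:ℝ)/2) * (1 + τ) ^ (-(7:ℝ)/2) :=
          intervalIntegral.integral_const_mul _ _
      _ ≤ C * (14 * (1 + t) ^ (-(5:ℝ)/2)) := by
          apply mul_le_mul_of_nonneg_left hconv hC.le
      _ = 14 * C * (1 + t) ^ (-(5:ℝ)/2) := by ring
  have hPbound : ∫ τ in T₁..t, P τ ≤ 14 * C * (1 + t) ^ (-(5:ℝ)/4) := by
    have : ∫ τ in T₁..t, P τ
        = (1 + t) ^ ((5:ℝ)/4) * ∫ τ in T₁..t, (1 + t - τ) ^ (-(5:ℝ)/2) * g τ / (1 + τ) ^ 2 :=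
      intervalIntegral.integral_const_mul _ _
    rw [this]
    have hcomb : (1 + t) ^ ((5:ℝ)/4) * (1 + t) ^ (-(5:ℝ)/2) = (1 + t) ^ (-(5:ℝ)/4) := by
      rw [← Real.rpow_add h1t]; norm_num
    calc (1 + t) ^ ((5:ℝ)/4) * ∫ τ in T₁..t, (1 + t - τ) ^ (-(5:ℝ)/2) * g τ / (1 + τ) ^ 2
        ≤ (1 + t) ^ ((5:ℝ)/4) * (14 * C * (1 + t) ^ (-(5:ℝ)/2)) :=
          mul_le_mul_of_nonneg_left hinner (Real.rpow_pos_of_pos h1t _).le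
      _ = 14 * C * (1 + t) ^ (-(5:ℝ)/4) := by rw [← hcomb]; ring
  -- bound ∫ Q
  have hQbound : ∫ τ in T₁..t, Q τ ≤ C * (1 + t) ^ (-(5:ℝ)/4) := by
    have : ∫ τ in T₁..t, Q τ
        = (1 + t) ^ (-(5:ℝ)/4) * ∫ τ in T₁..t, (1 + τ) ^ 2 * h τ :=
      intervalIntegral.integral_const_mul _ _
    rw [this]
    have h2 : ∫ τ in T₁..t, (1 + τ) ^ 2 * h τ ≤ C := by
      rw [intervalIntegral.integral_of_le ht]
      calc ∫ τ in Set.Ioc T₁ t, (1 + τ) ^ 2 * h τ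
          ≤ ∫ τ in Set.Ioi T₁, (1 + τ) ^ 2 * h τ := by
            apply setIntegral_mono_set hhint
            · rw [Filter.EventuallyLE, ae_restrict_iff' measurableSet_Ioi]
              apply Filter.Eventually.of_forall
              intro x hx
              have hx' : T₁ ≤ x := le_of_lt hx
              have := hh0 x hx'
              have : (0:ℝ) < 1 + x := by linarith
              positivity
            · exact (Set.Ioc_subset_Ioi_self).eventuallyLE
        _ ≤ C := hh
    have hpow : 0 < (1 + t) ^ (-(5:ℝ)/4) := Real.rpow_pos_of_pos h1t _
    calc (1 + t) ^ (-(5:ℝ)/4) * ∫ τ in T₁..t, (1 + τ) ^ 2 * h τ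
        ≤ (1 + t) ^ (-(5:ℝ)/4) * C := mul_le_mul_of_nonneg_left h2 hpow.le
      _ = C * (1 + t) ^ (-(5:ℝ)/4) := by ring
  -- finish
  have hsum : ∫ τ in T₁..t, (P τ + Q τ) / 2
      = ((∫ τ in T₁..t, P τ) + ∫ τ in T₁..t, Q τ) / 2 := by
    rw [intervalIntegral.integral_div, intervalIntegral.integral_add iP iQ]
  calc (∫ τ in T₁..t, (1 + t - τ) ^ (-(5:ℝ)/4) * g τ ^ ((1:ℝ)/2) * h τ ^ ((1:ℝ)/2))
      ≤ ∫ τ in T₁..t, (P τ + Q τ) / 2 := hmono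
    _ = ((∫ τ in T₁..t, P τ) + ∫ τ in T₁..t, Q τ) / 2 := hsum
    _ ≤ (14 * C * (1 + t) ^ (-(5:ℝ)/4) + C * (1 + t) ^ (-(5:ℝ)/4)) / 2 := by linarith
    _ ≤ 8 * C * (1 + t) ^ (-(5:ℝ)/4) := by
        have hpow : 0 < (1 + t) ^ (-(5:ℝ)/4) := Real.rpow_pos_of_pos h1t _
        nlinarith
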